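/- arXiv:2209.04832 — 3 statements merged into one kernel-verified Lean document; each statement's English description precedes it below -/
import Mathlib

section
/- For each β ∈ (0,1) there exists a constant c(β) such that for all x ∈ ℝ and 0 ≤ τ < t₂ < t₁, ∫_ℝ |G(x,t₁;s,τ) − G(x,t₂;s,τ)| ds ≤ c(β) · ((t₁−t₂)/(t₂−τ))^{β/2}. -/
open MeasureTheory Real

noncomputable def G (x t s τ : ℝ) : ℝ :=
  (1 / Real.sqrt (4 * Real.pi * (t - τ))) * Real.exp (-(x - s)^2 / (4 * (t - τ)))

lemma gauss_integrable (x : ℝ) {d : ℝ} (hd : 0 < d) :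
    Integrable (fun s : ℝ => Real.exp (-(x - s)^2 / (4 * d))) := by
  have hb : 0 < 1 / (4 * d) := by positivity
  have h := (integrable_exp_neg_mul_sq hb).comp_sub_right x
  convert h using 2 with s
  ring_nf

lemma gauss_integral (x : ℝ) {d : ℝ} (hd : 0 < d) :
    ∫ s : ℝ, Real.exp (-(x - s)^2 / (4 * d)) = Real.sqrt (4 * Real.pi * d) := by
  have hb : 0 < 1 / (4 * d) := by positivity
  have h1 : (fun s : ℝ => Real.exp (-(x - s)^2 / (4 * d)))
      = fun s : ℝ => Real.exp (-(1 / (4 * d)) * (s - x)^2) := by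
    funext s; ring_nf
  rw [h1, MeasureTheory.integral_sub_right_eq_self
    (fun s : ℝ => Real.exp (-(1 / (4 * d)) * s^2)) x, integral_gaussian]
  congr 1
  field_simp

lemma G_integrable (x t τ : ℝ) (h : τ < t) : Integrable (fun s => G x t s τ) := by
  have hd : 0 < t - τ := sub_pos.mpr h
  exact (gauss_integrable x hd).const_mul _

lemma G_integral (x t τ : ℝ) (h : τ < t) : ∫ s : ℝ, G x t s τ = 1 := by
  have hd : 0 < t - τ := sub_pos.mpr h
  have hπ := Real.pi_pos
  have hs : 0 < Real.sqrt (4 * Real.pi * (t - τ)) := Real.sqrt_pos.mpr (by positivity)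
  simp only [G, integral_const_mul, gauss_integral x hd]
  field_simp

theorem heat_kernel_holder_in_t (β : ℝ) (hβ : β ∈ Set.Ioo (0:ℝ) 1) :
    ∃ c : ℝ, 0 < c ∧ ∀ (x t₁ t₂ τ : ℝ), 0 ≤ τ → τ < t₂ → t₂ < t₁ →
      ∫ s : ℝ, |G x t₁ s τ - G x t₂ s τ| ≤
        c * ((t₁ - t₂) / (t₂ - τ)) ^ (β / 2) := by
  obtain ⟨hβ0, hβ1⟩ := hβ
  refine ⟨2, by norm_num, fun x t₁ t₂ τ hτ h2 h1 => ?_⟩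
  have hπ := Real.pi_pos
  set d₁ := t₁ - τ with hd₁def
  set d₂ := t₂ - τ with hd₂def
  have hd₂ : 0 < d₂ := sub_pos.mpr h2
  have hd₁ : 0 < d₁ := sub_pos.mpr (h2.trans h1)
  have hdd : d₂ < d₁ := by simp only [hd₁def, hd₂def]; linarith
  set r := (t₁ - t₂) / (t₂ - τ) with hrdef
  have hr : 0 < r := div_pos (sub_pos.mpr h1) hd₂
  have hInt1 : Integrable (fun s => G x t₁ s τ) := G_integrable x t₁ τ (h2.trans h1)
  have hInt2 : Integrable (fun s => G x t₂ s τ) := G_integrable x t₂ τ h2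
  have hIntAbs : Integrable (fun s => |G x t₁ s τ - G x t₂ s τ|) := (hInt1.sub hInt2).abs
  have hrβ : (0:ℝ) < r ^ (β / 2) := Real.rpow_pos_of_pos hr _
  have hG1nn : ∀ s, 0 ≤ G x t₁ s τ := fun s => by unfold G; positivity
  have hG2nn : ∀ s, 0 ≤ G x t₂ s τ := fun s => by unfold G; positivity
  rcases le_or_gt 1 r with hr1 | hr1
  · -- use ∫ |G₁ - G₂| ≤ 2 ≤ 2 r^(β/2)
    have hb : ∫ s : ℝ, |G x t₁ s τ - G x t₂ s τ| ≤ 2 := by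
      have hle : ∀ s, |G x t₁ s τ - G x t₂ s τ| ≤ G x t₁ s τ + G x t₂ s τ := fun s => by
        rw [abs_sub_le_iff]
        constructor <;> nlinarith [hG1nn s, hG2nn s]
      calc ∫ s : ℝ, |G x t₁ s τ - G x t₂ s τ|
          ≤ ∫ s : ℝ, (G x t₁ s τ + G x t₂ s τ) :=
            integral_mono hIntAbs (hInt1.add hInt2) hle
        _ = 2 := by
            rw [integral_add hInt1 hInt2, G_integral x t₁ τ (h2.trans h1),
              G_integral x t₂ τ h2]
            norm_num
    have h1r : (1:ℝ) ≤ r ^ (β / 2) := Real.one_le_rpow hr1 (by linarith)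
    nlinarith
  · -- r < 1 : use refined bound 2 * (√(d₁/d₂) - 1)
    set c₁ := 1 / Real.sqrt (4 * Real.pi * d₁) with hc₁
    set c₂ := 1 / Real.sqrt (4 * Real.pi * d₂) with hc₂
    have hs₁ : 0 < Real.sqrt (4 * Real.pi * d₁) := Real.sqrt_pos.mpr (by positivity)
    have hs₂ : 0 < Real.sqrt (4 * Real.pi * d₂) := Real.sqrt_pos.mpr (by positivity)
    have hc₁pos : 0 < c₁ := by positivity
    have hc₂pos : 0 < c₂ := by positivity
    have hc12 : c₁ ≤ c₂ := by
      apply one_div_le_one_div_of_le hs₂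
      exact Real.sqrt_le_sqrt (by nlinarith)
    have hpt : ∀ s, |G x t₁ s τ - G x t₂ s τ| ≤
        (c₂ - c₁) * Real.exp (-(x - s)^2 / (4 * d₁))
          + c₂ * (Real.exp (-(x - s)^2 / (4 * d₁)) - Real.exp (-(x - s)^2 / (4 * d₂))) := by
      intro s
      have hE : Real.exp (-(x - s)^2 / (4 * d₂)) ≤ Real.exp (-(x - s)^2 / (4 * d₁)) := by
        apply Real.exp_le_exp.mpr
        rw [neg_div, neg_div, neg_le_neg_iff]
        apply div_le_div_of_nonneg_left (by positivity) (by linarith) (by linarith)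
      have hE1pos : 0 < Real.exp (-(x - s)^2 / (4 * d₁)) := Real.exp_pos _
      show |c₁ * Real.exp (-(x - s)^2 / (4 * d₁)) - c₂ * Real.exp (-(x - s)^2 / (4 * d₂))| ≤ _
      rw [abs_sub_le_iff]
      constructor <;> nlinarith [Real.exp_pos (-(x - s)^2 / (4 * d₂))]
    have hIntRHS : Integrable (fun s => (c₂ - c₁) * Real.exp (-(x - s)^2 / (4 * d₁))
          + c₂ * (Real.exp (-(x - s)^2 / (4 * d₁)) - Real.exp (-(x - s)^2 / (4 * d₂)))) :=
      (((gauss_integrable x hd₁).const_mul _).add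
        (((gauss_integrable x hd₁).sub (gauss_integrable x hd₂)).const_mul _))
    have hmain : ∫ s : ℝ, |G x t₁ s τ - G x t₂ s τ| ≤
        2 * (Real.sqrt (4 * Real.pi * d₁) / Real.sqrt (4 * Real.pi * d₂) - 1) := by
      calc ∫ s : ℝ, |G x t₁ s τ - G x t₂ s τ|
          ≤ ∫ s : ℝ, ((c₂ - c₁) * Real.exp (-(x - s)^2 / (4 * d₁))
              + c₂ * (Real.exp (-(x - s)^2 / (4 * d₁)) - Real.exp (-(x - s)^2 / (4 * d₂)))) :=
            integral_mono hIntAbs hIntRHS hpt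
        _ = (c₂ - c₁) * Real.sqrt (4 * Real.pi * d₁)
              + c₂ * (Real.sqrt (4 * Real.pi * d₁) - Real.sqrt (4 * Real.pi * d₂)) := by
            have hIa : Integrable (fun s : ℝ =>
                (c₂ - c₁) * Real.exp (-(x - s)^2 / (4 * d₁))) :=
              (gauss_integrable x hd₁).const_mul _
            have hIb : Integrable (fun s : ℝ => c₂ * (Real.exp (-(x - s)^2 / (4 * d₁))
                - Real.exp (-(x - s)^2 / (4 * d₂)))) := by
              have h := ((gauss_integrable x hd₁).sub (gauss_integrable x hd₂)).const_mul c₂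
              simpa using h
            rw [integral_add hIa hIb]
            rw [integral_const_mul, integral_const_mul,
              integral_sub (gauss_integrable x hd₁) (gauss_integrable x hd₂),
              gauss_integral x hd₁, gauss_integral x hd₂]
        _ = 2 * (Real.sqrt (4 * Real.pi * d₁) / Real.sqrt (4 * Real.pi * d₂) - 1) := by
            rw [hc₁, hc₂]
            field_simp
            ring
    have hratio : Real.sqrt (4 * Real.pi * d₁) / Real.sqrt (4 * Real.pi * d₂)
        = Real.sqrt (1 + r) := by
      rw [← Real.sqrt_div (by positivity)]
      congr 1
      rw [hrdef, hd₁def, hd₂def]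
      have hne : t₂ - τ ≠ 0 := (sub_pos.mpr h2).ne'
      field_simp
      ring
    have hsqrt1r : Real.sqrt (1 + r) ≤ 1 + Real.sqrt r := by
      have h := Real.sq_sqrt hr.le
      have h2 : Real.sqrt (1 + r) ≤ Real.sqrt ((1 + Real.sqrt r)^2) :=
        Real.sqrt_le_sqrt (by nlinarith [Real.sqrt_nonneg r])
      rwa [Real.sqrt_sq (by positivity)] at h2
    have hfin : Real.sqrt r ≤ r ^ (β / 2) := by
      rw [Real.sqrt_eq_rpow]
      exact Real.rpow_le_rpow_of_exponent_ge hr hr1.le (by linarith)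
    rw [hratio] at hmain
    linarith
end

section
/- For any two bounded functions v₁, v₂ on ℝ × (0,T] and any (x,t) with 0 < t ≤ T, the difference of the Duhamel nonlinear terms satisfies |∫₀^t∫_ℝ ((v₁² − v₂²)(s,τ)/2)(G(x,t;s,τ)h_α'(s) + G_s(x,t;s,τ)h_α(s)) ds dτ| ≤ (‖v₁‖_∞ + ‖v₂‖_∞)(‖h_α'‖_∞ √t/2 + 1/√π)·√t·‖v₁ − v₂‖_∞. -/
open MeasureTheory Real

noncomputable def hfun (α : ℝ) (x : ℝ) : ℝ := (1 + x^2) ^ (-α)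

lemma aux_integral_abs_mul_exp {b : ℝ} (hb : 0 < b) :
    ∫ u : ℝ, |u| * Real.exp (-b * u ^ 2) = 1 / b := by
  have key : ∫ r in Set.Ioi (0:ℝ), r * Real.exp (-b * r ^ 2) = (2*b)⁻¹ := by
    have hder : ∀ x ∈ Set.Ici (0:ℝ),
        HasDerivAt (fun x : ℝ => -(2*b)⁻¹ * Real.exp (-b * x ^ 2))
          (x * Real.exp (-b * x ^ 2)) x := by
      intro x _
      have h2 : HasDerivAt (fun x : ℝ => -b * x ^ 2) (-b * (2 * x ^ 1)) x := by
        simpa using ((hasDerivAt_pow 2 x).const_mul (-b))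
      have h3 := (h2.exp).const_mul (-(2*b)⁻¹)
      refine h3.congr_deriv ?_
      field_simp
    have h1 : Filter.Tendsto (fun x : ℝ => -b * x ^ 2) Filter.atTop Filter.atBot := by
      have h0 : Filter.Tendsto (fun x : ℝ => b * x ^ 2) Filter.atTop Filter.atTop :=
        (Filter.tendsto_pow_atTop (by norm_num : (2:ℕ) ≠ 0)).const_mul_atTop hb
      exact (Filter.tendsto_neg_atTop_atBot.comp h0).congr
        (fun x => by simp only [Function.comp_apply]; ring)
    have htend : Filter.Tendsto (fun x : ℝ => -(2*b)⁻¹ * Real.exp (-b * x ^ 2))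
        Filter.atTop (nhds 0) := by
      have h2 : Filter.Tendsto (fun x : ℝ => Real.exp (-b * x ^ 2)) Filter.atTop (nhds 0) :=
        (Real.tendsto_exp_atBot.comp h1).congr (fun x => rfl)
      simpa using h2.const_mul (-(2*b)⁻¹)
    have := integral_Ioi_of_hasDerivAt_of_tendsto' hder
      (integrable_mul_exp_neg_mul_sq hb).integrableOn htend
    simpa using this
  calc ∫ u : ℝ, |u| * Real.exp (-b * u ^ 2)
      = ∫ u : ℝ, |u| * Real.exp (-b * |u| ^ 2) := by
        congr 1; funext u; rw [sq_abs]
    _ = 2 * ∫ r in Set.Ioi (0:ℝ), r * Real.exp (-b * r ^ 2) :=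
        integral_comp_abs (f := fun r => r * Real.exp (-b * r ^ 2))
    _ = 1 / b := by rw [key]; field_simp

lemma deriv_G (x t τ : ℝ) (h : 0 < t - τ) (s : ℝ) :
    deriv (fun s' => G x t s' τ) s = G x t s τ * ((x - s) / (2 * (t - τ))) := by
  have h4 : (4 * (t - τ)) ≠ 0 := by positivity
  have h1 : HasDerivAt (fun s' : ℝ => -(x - s')^2 / (4 * (t - τ))) ((x - s)/(2*(t-τ))) s := by
    have h0 : HasDerivAt (fun s' : ℝ => x - s') (-1) s := (hasDerivAt_id s).const_sub x
    have := ((h0.pow 2).neg).div_const (4 * (t - τ))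
    refine this.congr_deriv ?_
    field_simp
    ring
  have h2 := (h1.exp.const_mul (1 / Real.sqrt (4 * Real.pi * (t - τ))))
  have h3 : HasDerivAt (fun s' => G x t s' τ) (G x t s τ * ((x - s)/(2*(t-τ)))) s := by
    simp only [G]
    refine h2.congr_deriv ?_
    ring
  exact h3.deriv

lemma G_eq (x t τ : ℝ) (s : ℝ) :
    G x t s τ = (1 / Real.sqrt (4 * Real.pi * (t - τ))) *
      Real.exp (-(4 * (t - τ))⁻¹ * (s - x)^2) := by
  simp only [G]
  rw [show -(x - s)^2 / (4 * (t - τ)) = -(4 * (t - τ))⁻¹ * (s - x)^2 by ring]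

lemma sqrtfour (h : (0:ℝ) < 1) : Real.sqrt 4 = 2 := by
  rw [show (4:ℝ) = 2^2 by norm_num, Real.sqrt_sq (by norm_num : (0:ℝ) ≤ 2)]

lemma integrable_G (x t τ : ℝ) (h : 0 < t - τ) : Integrable (fun s => G x t s τ) := by
  have hb : 0 < (4 * (t - τ))⁻¹ := by positivity
  simp_rw [G_eq]
  exact (((integrable_exp_neg_mul_sq hb).comp_sub_right x).const_mul _)

lemma integral_G (x t τ : ℝ) (h : 0 < t - τ) : ∫ s : ℝ, G x t s τ = 1 := by
  have hb : 0 < (4 * (t - τ))⁻¹ := by positivity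
  simp_rw [G_eq]
  rw [integral_const_mul,
    integral_sub_right_eq_self (fun u => Real.exp (-(4 * (t - τ))⁻¹ * u ^ 2)) x,
    integral_gaussian]
  rw [show Real.pi / (4 * (t - τ))⁻¹ = 4 * Real.pi * (t - τ) by field_simp]
  rw [one_div, inv_mul_cancel₀ (ne_of_gt (Real.sqrt_pos.mpr (by positivity)))]

lemma integrable_G_abs (x t τ : ℝ) (h : 0 < t - τ) :
    Integrable (fun s => G x t s τ * (|x - s| / (2 * (t - τ)))) := by
  have hb : 0 < (4 * (t - τ))⁻¹ := by positivity
  have base : Integrable (fun u : ℝ => |u| * Real.exp (-(4 * (t - τ))⁻¹ * u ^ 2)) := by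
    refine (integrable_mul_exp_neg_mul_sq hb).abs.congr
      (Filter.Eventually.of_forall (fun u => ?_))
    simp only []
    rw [abs_mul, abs_of_nonneg (Real.exp_nonneg _)]
  have h1 := ((base.comp_sub_right x).const_mul
    ((1 / Real.sqrt (4 * Real.pi * (t - τ))) / (2 * (t - τ))))
  apply h1.congr
  filter_upwards with s
  rw [G_eq]
  rw [abs_sub_comm x s]
  ring

lemma integral_G_abs (x t τ : ℝ) (h : 0 < t - τ) :
    ∫ s : ℝ, G x t s τ * (|x - s| / (2 * (t - τ)))
      = 1 / Real.sqrt (Real.pi * (t - τ)) := by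
  have hb : 0 < (4 * (t - τ))⁻¹ := by positivity
  have hrw : ∀ s : ℝ, G x t s τ * (|x - s| / (2 * (t - τ)))
      = ((1 / Real.sqrt (4 * Real.pi * (t - τ))) / (2 * (t - τ))) *
        (|s - x| * Real.exp (-(4 * (t - τ))⁻¹ * (s - x)^2)) := by
    intro s
    rw [G_eq, abs_sub_comm x s]
    ring
  simp_rw [hrw]
  rw [integral_const_mul,
    integral_sub_right_eq_self (fun u => |u| * Real.exp (-(4 * (t - τ))⁻¹ * u ^ 2)) x,
    aux_integral_abs_mul_exp hb]
  rw [show (1:ℝ) / (4 * (t - τ))⁻¹ = 4 * (t - τ) by field_simp]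
  rw [show 4 * Real.pi * (t - τ) = 4 * (Real.pi * (t - τ)) by ring,
    Real.sqrt_mul (by norm_num : (0:ℝ) ≤ 4), sqrtfour one_pos]
  have hs : 0 < Real.sqrt (Real.pi * (t - τ)) :=
    Real.sqrt_pos.mpr (by positivity)
  field_simp
  ring

theorem duhamel_nonlinear_difference_bound
    (α : ℝ) (hα : 0 < α) (T : ℝ) (hT : 0 < T)
    (v₁ v₂ : ℝ → ℝ → ℝ)
    (N₁ : ℝ) (hN₁ : IsLUB (Set.range fun p : ℝ × ℝ => |v₁ p.1 p.2|) N₁)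
    (N₂ : ℝ) (hN₂ : IsLUB (Set.range fun p : ℝ × ℝ => |v₂ p.1 p.2|) N₂)
    (H : ℝ) (hH : IsLUB (Set.range fun x => |deriv (hfun α) x|) H)
    (D : ℝ) (hD : IsLUB (Set.range fun p : ℝ × ℝ => |v₁ p.1 p.2 - v₂ p.1 p.2|) D)
    (x t : ℝ) (ht : 0 < t) (htT : t ≤ T) :
    |∫ τ in Set.Ioo 0 t, ∫ s : ℝ,
        ((v₁ s τ)^2 - (v₂ s τ)^2) / 2 * (G x t s τ * deriv (hfun α) s +
          deriv (fun s' => G x t s' τ) s * hfun α s)| ≤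
      (N₁ + N₂) * (H * Real.sqrt t / 2 + 1 / Real.sqrt Real.pi) * Real.sqrt t * D := by
  have hN1 : ∀ s τ, |v₁ s τ| ≤ N₁ := fun s τ => hN₁.1 ⟨(s, τ), rfl⟩
  have hN2 : ∀ s τ, |v₂ s τ| ≤ N₂ := fun s τ => hN₂.1 ⟨(s, τ), rfl⟩
  have hH' : ∀ s, |deriv (hfun α) s| ≤ H := fun s => hH.1 ⟨s, rfl⟩
  have hD' : ∀ s τ, |v₁ s τ - v₂ s τ| ≤ D := fun s τ => hD.1 ⟨(s, τ), rfl⟩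
  have hN1p : 0 ≤ N₁ := le_trans (abs_nonneg _) (hN1 0 0)
  have hN2p : 0 ≤ N₂ := le_trans (abs_nonneg _) (hN2 0 0)
  have hHp : 0 ≤ H := le_trans (abs_nonneg _) (hH' 0)
  have hDp : 0 ≤ D := le_trans (abs_nonneg _) (hD' 0 0)
  set C : ℝ := (N₁ + N₂) * D / 2 with hC
  have hC0 : 0 ≤ C := by rw [hC]; positivity
  have hfun01 : ∀ s : ℝ, 0 ≤ hfun α s ∧ hfun α s ≤ 1 := by
    intro s
    constructor
    · exact Real.rpow_nonneg (by positivity) _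
    · exact Real.rpow_le_one_of_one_le_of_nonpos (by nlinarith [sq_nonneg s]) (by linarith)
  -- inner bound
  have inner_bound : ∀ τ ∈ Set.Ioo (0:ℝ) t,
      |∫ s : ℝ, ((v₁ s τ)^2 - (v₂ s τ)^2) / 2 * (G x t s τ * deriv (hfun α) s +
          deriv (fun s' => G x t s' τ) s * hfun α s)|
        ≤ C * H + C * (1 / Real.sqrt (Real.pi * (t - τ))) := by
    intro τ hτ
    have ha : 0 < t - τ := by linarith [hτ.2]
    have hGpos : ∀ s, 0 ≤ G x t s τ := fun s => by
      simp only [G]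
      exact mul_nonneg (div_nonneg one_pos.le (Real.sqrt_nonneg _)) (Real.exp_nonneg _)
    have hpt : ∀ s : ℝ, |((v₁ s τ)^2 - (v₂ s τ)^2) / 2 * (G x t s τ * deriv (hfun α) s +
          deriv (fun s' => G x t s' τ) s * hfun α s)|
        ≤ C * H * G x t s τ + C * (G x t s τ * (|x - s| / (2 * (t - τ)))) := by
      intro s
      rw [abs_mul]
      have e1 : |((v₁ s τ)^2 - (v₂ s τ)^2) / 2| ≤ C := by
        rw [show (v₁ s τ)^2 - (v₂ s τ)^2 = (v₁ s τ + v₂ s τ) * (v₁ s τ - v₂ s τ) by ring,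
          abs_div, abs_mul, abs_two, hC]
        gcongr
        · exact le_trans (abs_add_le _ _) (add_le_add (hN1 s τ) (hN2 s τ))
        · exact hD' s τ
      have e2 : |G x t s τ * deriv (hfun α) s + deriv (fun s' => G x t s' τ) s * hfun α s|
          ≤ H * G x t s τ + G x t s τ * (|x - s| / (2 * (t - τ))) := by
        refine le_trans (abs_add_le _ _) ?_
        rw [abs_mul, abs_mul, deriv_G x t τ ha s, abs_mul, abs_of_nonneg (hGpos s)]
        have hq : |(x - s) / (2 * (t - τ))| = |x - s| / (2 * (t - τ)) := by
          rw [abs_div, abs_of_nonneg (by linarith : (0:ℝ) ≤ 2*(t-τ))]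
        rw [hq]
        have t1 : G x t s τ * |deriv (hfun α) s| ≤ H * G x t s τ := by
          rw [mul_comm H]
          exact mul_le_mul_of_nonneg_left (hH' s) (hGpos s)
        have t2 : G x t s τ * (|x-s|/(2*(t-τ))) * |hfun α s| ≤ G x t s τ * (|x-s|/(2*(t-τ))) := by
          rw [abs_of_nonneg (hfun01 s).1]
          exact mul_le_of_le_one_right
            (mul_nonneg (hGpos s) (div_nonneg (abs_nonneg _) (by linarith))) (hfun01 s).2
        linarith
      calc |((v₁ s τ)^2 - (v₂ s τ)^2) / 2| * |G x t s τ * deriv (hfun α) s +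
              deriv (fun s' => G x t s' τ) s * hfun α s|
          ≤ C * (H * G x t s τ + G x t s τ * (|x - s| / (2 * (t - τ)))) :=
            mul_le_mul e1 e2 (abs_nonneg _) hC0
        _ = C * H * G x t s τ + C * (G x t s τ * (|x - s| / (2 * (t - τ)))) := by ring
    have hi1 : Integrable (fun s => C * H * G x t s τ) :=
      (integrable_G x t τ ha).const_mul (C * H)
    have hi2 : Integrable (fun s => C * (G x t s τ * (|x - s| / (2 * (t - τ))))) :=
      (integrable_G_abs x t τ ha).const_mul C
    have hsum : Integrable (fun s => C * H * G x t s τ +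
        C * (G x t s τ * (|x - s| / (2 * (t - τ))))) := hi1.add hi2
    have key := norm_integral_le_of_norm_le hsum
      (Filter.Eventually.of_forall (fun s => by rw [Real.norm_eq_abs]; exact hpt s))
    rw [Real.norm_eq_abs] at key
    refine le_trans key (le_of_eq ?_)
    rw [integral_add hi1 hi2, integral_const_mul, integral_const_mul,
      integral_G x t τ ha, integral_G_abs x t τ ha]
    ring
  -- outer bound function integrability
  have hπ : (0:ℝ) < Real.sqrt Real.pi := Real.sqrt_pos.mpr Real.pi_pos
  have hrpow_int : IntegrableOn (fun τ : ℝ => (t - τ) ^ (-(1:ℝ)/2)) (Set.Ioo 0 t) := by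
    have h1 : IntervalIntegrable (fun τ : ℝ => (t - τ) ^ (-(1:ℝ)/2)) volume 0 t := by
      have := (intervalIntegral.intervalIntegrable_rpow'
        (a := 0) (b := t) (r := -(1:ℝ)/2) (by norm_num)).comp_sub_left t
      simpa using this.symm
    exact (intervalIntegrable_iff_integrableOn_Ioo_of_le ht.le).mp h1
  have hbound_eq : ∀ τ ∈ Set.Ioo (0:ℝ) t,
      C * H + C * (1 / Real.sqrt (Real.pi * (t - τ)))
        = C * H + (C / Real.sqrt Real.pi) * (t - τ) ^ (-(1:ℝ)/2) := by
    intro τ hτ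
    have ha : 0 < t - τ := by linarith [hτ.2]
    have h2 : (t - τ) ^ (-(1:ℝ)/2) = (Real.sqrt (t - τ))⁻¹ := by
      rw [show -(1:ℝ)/2 = -(1/2) by norm_num, Real.rpow_neg ha.le, Real.sqrt_eq_rpow]
    rw [h2, Real.sqrt_mul Real.pi_pos.le]
    have hs : 0 < Real.sqrt (t - τ) := Real.sqrt_pos.mpr ha
    field_simp
  have houter0 : IntegrableOn
      (fun τ : ℝ => C * H + (C / Real.sqrt Real.pi) * (t - τ) ^ (-(1:ℝ)/2))
      (Set.Ioo 0 t) :=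
    (integrableOn_const measure_Ioo_lt_top.ne).add
      (hrpow_int.const_mul (C / Real.sqrt Real.pi))
  have houter : IntegrableOn
      (fun τ => C * H + C * (1 / Real.sqrt (Real.pi * (t - τ)))) (Set.Ioo 0 t) :=
    houter0.congr_fun (fun τ hτ => (hbound_eq τ hτ).symm) measurableSet_Ioo
  have main := norm_integral_le_of_norm_le houter (by
    filter_upwards [ae_restrict_mem measurableSet_Ioo] with τ hτ
    rw [Real.norm_eq_abs]
    exact inner_bound τ hτ)
  rw [Real.norm_eq_abs] at main
  refine le_trans main ?_
  -- compute the outer integral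
  have hval : ∫ τ in Set.Ioo (0:ℝ) t, (t - τ) ^ (-(1:ℝ)/2) = 2 * Real.sqrt t := by
    rw [← integral_Ioc_eq_integral_Ioo, ← intervalIntegral.integral_of_le ht.le,
      intervalIntegral.integral_comp_sub_left (fun u => u ^ (-(1:ℝ)/2)) t]
    simp only [sub_self, sub_zero]
    rw [integral_rpow (Or.inl (by norm_num))]
    rw [show -(1:ℝ)/2 + 1 = 1/2 by norm_num, Real.zero_rpow (by norm_num : (1:ℝ)/2 ≠ 0),
      ← Real.sqrt_eq_rpow]
    ring
  have hcalc : ∫ τ in Set.Ioo (0:ℝ) t, (C * H + C * (1 / Real.sqrt (Real.pi * (t - τ))))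
      = C * H * t + (C / Real.sqrt Real.pi) * (2 * Real.sqrt t) := by
    rw [setIntegral_congr_fun measurableSet_Ioo hbound_eq]
    rw [integral_add (integrableOn_const (C := C * H) measure_Ioo_lt_top.ne)
      (hrpow_int.const_mul (C / Real.sqrt Real.pi))]
    rw [setIntegral_const, integral_const_mul, hval]
    rw [measureReal_def, Real.volume_Ioo, sub_zero, ENNReal.toReal_ofReal ht.le, smul_eq_mul]
    ring
  rw [hcalc]
  refine le_of_eq ?_
  have hst : Real.sqrt t * Real.sqrt t = t := Real.mul_self_sqrt ht.le
  set u := Real.sqrt t with hu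
  rw [hC, ← hst]
  field_simp
end

section
/- Gronwall inequality with square-root singular kernel: let v : [0,T] → [0,∞) be continuous and bounded, and suppose v(t) ≤ A + C ∫₀^t (t−τ)^{−1/2} v(τ) dτ for all t ∈ [0,T], where A, C ≥ 0. Then v(t) ≤ A · E(t) where E(t) = Σ_{n=0}^∞ (C Γ(1/2))^n t^{n/2} / Γ(n/2 + 1), and in particular v(t) ≤ A · c(C,T) for a finite constant c(C,T). -/
set_option maxHeartbeats 1000000

open MeasureTheory Real

section SingularGronwallAux
open Set Filter

-- kernel integrability
lemma ker_int {t : ℝ} (ht : 0 < t) :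
    IntegrableOn (fun τ => (t - τ) ^ (-(1/2:ℝ))) (Set.Ioo 0 t) := by
  have h : IntervalIntegrable (fun x : ℝ => x ^ (-(1/2:ℝ))) volume 0 t :=
    intervalIntegral.intervalIntegrable_rpow' (by norm_num)
  have h2 := (h.comp_sub_left t).symm
  rw [show t - t = 0 by ring, show t - 0 = t by ring, intervalIntegrable_iff_integrableOn_Ioc_of_le ht.le] at h2
  simpa using h2.mono_set Set.Ioo_subset_Ioc_self

lemma ker_mul_int {t : ℝ} (ht : 0 < t) {f : ℝ → ℝ}
    (hf : AEStronglyMeasurable f (volume.restrict (Set.Ioo 0 t)))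
    {K : ℝ} (hK : ∀ τ ∈ Set.Ioo (0:ℝ) t, |f τ| ≤ K) :
    IntegrableOn (fun τ => (t - τ) ^ (-(1/2:ℝ)) * f τ) (Set.Ioo 0 t) := by
  have := Integrable.bdd_mul (c := K) (ker_int ht) hf
    ((ae_restrict_iff' measurableSet_Ioo).2 (Filter.Eventually.of_forall
      (fun τ hτ => by simpa using hK τ hτ)))
  simpa [mul_comm, IntegrableOn] using this

lemma I_eval {t : ℝ} (ht : 0 < t) {p : ℝ} (hp : 0 ≤ p) :
    ∫ τ in Set.Ioo (0:ℝ) t, (t - τ) ^ (-(1/2:ℝ)) * τ ^ p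
      = Real.Gamma (p+1) * Real.Gamma (1/2) / Real.Gamma (p + 3/2) * t ^ (p + 1/2) := by
  have hu : (0:ℝ) < p + 1 := by linarith
  have key := Complex.betaIntegral_scaled ((p:ℂ)+1) (1/2 : ℂ) ht
  -- identify the complex integral with the real one
  have h1 : (∫ x in (0:ℝ)..t, ((x:ℂ) ^ ((p:ℂ)+1-1) * ((t:ℂ)-x) ^ ((1/2:ℂ)-1)))
      = ((∫ x in (0:ℝ)..t, x ^ p * (t - x) ^ (-(1/2:ℝ)) : ℝ) : ℂ) := by
    rw [← intervalIntegral.integral_ofReal]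
    apply intervalIntegral.integral_congr
    intro x hx
    rw [Set.uIcc_of_le ht.le] at hx
    have hx0 : 0 ≤ x := hx.1
    have hxt : 0 ≤ t - x := by linarith [hx.2]
    dsimp only
    rw [Complex.ofReal_mul, Complex.ofReal_cpow hx0, Complex.ofReal_cpow hxt]
    push_cast
    norm_num
  -- identify the beta integral with real Gammas
  have hne : Complex.Gamma ((p:ℂ)+1+1/2) ≠ 0 := by
    apply Complex.Gamma_ne_zero_of_re_pos
    simp [Complex.add_re]
    norm_num
    linarith
  have hG := Complex.Gamma_mul_Gamma_eq_betaIntegral (s := (p:ℂ)+1) (t := (1/2:ℂ))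
    (by simp; linarith) (by norm_num)
  have hBeta : Complex.betaIntegral ((p:ℂ)+1) (1/2) =
      ((Real.Gamma (p+1) * Real.Gamma (1/2) / Real.Gamma (p + 3/2) : ℝ) : ℂ) := by
    have h2 : ((p:ℂ)+1+1/2) = ((p + 3/2 : ℝ) : ℂ) := by push_cast; ring
    have h3 : ((p:ℂ)+1) = ((p + 1 : ℝ) : ℂ) := by push_cast; ring
    have h4 : ((1/2 : ℂ)) = ((1/2 : ℝ) : ℂ) := by norm_num
    rw [h2] at hG hne
    rw [h3, h4, Complex.Gamma_ofReal, Complex.Gamma_ofReal, Complex.Gamma_ofReal] at hG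
    have hc : ((Real.Gamma (p + 3/2) : ℝ) : ℂ) ≠ 0 := by
      rw [← Complex.Gamma_ofReal]; exact hne
    push_cast
    rw [h3, h4, eq_div_iff hc, mul_comm]
    exact hG.symm
  have h5 : ((p:ℂ)+1+1/2-1) = ((p + 1/2 : ℝ) : ℂ) := by push_cast; ring
  rw [h1, hBeta, h5, ← Complex.ofReal_cpow ht.le, ← Complex.ofReal_mul] at key
  have key' := Complex.ofReal_inj.mp key
  rw [intervalIntegral.integral_of_le ht.le, integral_Ioc_eq_integral_Ioo] at key'
  rw [mul_comm (Real.Gamma (p+1) * Real.Gamma (1/2) / Real.Gamma (p + 3/2)), ← key']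
  exact setIntegral_congr_fun measurableSet_Ioo (fun x hx => mul_comm _ _)

noncomputable def sgPhi (C : ℝ) (n : ℕ) (t : ℝ) : ℝ :=
  (C * Real.Gamma (1/2)) ^ n * t ^ ((n : ℝ) / 2) / Real.Gamma ((n : ℝ) / 2 + 1)

lemma sgGamma_pos (n : ℕ) : 0 < Real.Gamma ((n : ℝ) / 2 + 1) :=
  Real.Gamma_pos_of_pos (by positivity)

lemma sgB_nonneg {C : ℝ} (hC : 0 ≤ C) : 0 ≤ C * Real.Gamma (1/2) := by
  have := Real.Gamma_pos_of_pos (by norm_num : (0:ℝ) < 1/2)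
  positivity

lemma sgPhi_nonneg {C : ℝ} (hC : 0 ≤ C) (n : ℕ) {t : ℝ} (ht : 0 ≤ t) : 0 ≤ sgPhi C n t := by
  have h1 := sgB_nonneg hC
  have h2 := sgGamma_pos n
  have h3 : (0:ℝ) ≤ t ^ ((n : ℝ) / 2) := Real.rpow_nonneg ht _
  unfold sgPhi; positivity

lemma sgPhi_zero (C : ℝ) (t : ℝ) : sgPhi C 0 t = 1 := by
  simp [sgPhi, Real.Gamma_one]

lemma sgPhi_at_zero (C : ℝ) (n : ℕ) (hn : n ≠ 0) : sgPhi C n 0 = 0 := by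
  rw [sgPhi, Real.zero_rpow (by positivity), mul_zero, zero_div]

lemma sgPhi_mono {C : ℝ} (hC : 0 ≤ C) (n : ℕ) {t T : ℝ} (ht : 0 ≤ t) (hT : t ≤ T) :
    sgPhi C n t ≤ sgPhi C n T := by
  unfold sgPhi
  have h1 := sgB_nonneg hC
  have h2 := sgGamma_pos n
  have h3 : t ^ ((n : ℝ) / 2) ≤ T ^ ((n : ℝ) / 2) :=
    Real.rpow_le_rpow ht hT (by positivity)
  gcongr

lemma sgPhi_cont {C : ℝ} (n : ℕ) : ContinuousOn (fun t => sgPhi C n t) (Set.Ioi 0) := by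
  apply ContinuousOn.div_const
  apply ContinuousOn.mul continuousOn_const
  intro x hx
  exact (Real.continuousAt_rpow_const x _ (Or.inl (ne_of_gt hx))).continuousWithinAt

-- summability
lemma sgGamma_half_ge (m : ℕ) : (m.factorial : ℝ) / 2 ≤ Real.Gamma ((m : ℝ) + 3/2) := by
  induction m with
  | zero =>
    have : Real.Gamma ((0:ℕ) + 3/2) = (1/2) * Real.Gamma (1/2) := by
      rw [show ((0:ℕ):ℝ) + 3/2 = 1/2 + 1 by norm_num, Real.Gamma_add_one (by norm_num)]
    rw [this, Real.Gamma_one_half_eq]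
    have : (1:ℝ) ≤ Real.sqrt π := by
      rw [show (1:ℝ) = Real.sqrt 1 by simp]
      exact Real.sqrt_le_sqrt (by linarith [Real.pi_gt_three])
    simp only [Nat.factorial_zero, Nat.cast_one]
    nlinarith
  | succ m ih =>
    have h1 : ((m+1:ℕ) : ℝ) + 3/2 = ((m:ℝ) + 3/2) + 1 := by push_cast; ring
    rw [h1, Real.Gamma_add_one (by positivity)]
    have h2 : (0:ℝ) < (m:ℝ) + 3/2 := by positivity
    calc ((m+1).factorial : ℝ) / 2 = ((m:ℝ) + 1) * ((m.factorial : ℝ)/2) := by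
          push_cast [Nat.factorial_succ]; ring
      _ ≤ ((m:ℝ) + 3/2) * Real.Gamma ((m:ℝ) + 3/2) := by
          apply mul_le_mul (by linarith) ih (by positivity) (by positivity)

lemma sgPhi_summable {C : ℝ} (hC : 0 ≤ C) {t : ℝ} (ht : 0 ≤ t) :
    Summable (fun n => sgPhi C n t) := by
  set b := C * Real.Gamma (1/2) with hb
  have hb0 := sgB_nonneg hC
  rcases eq_or_lt_of_le ht with h0 | h0
  · apply summable_of_ne_finset_zero (s := {0})
    intro n hn
    rw [← h0]
    exact sgPhi_at_zero C n (by simpa using hn)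
  · apply Summable.even_add_odd
    · have key : ∀ m : ℕ, sgPhi C (2*m) t = (b^2 * t)^m / (m.factorial : ℝ) := by
        intro m
        have e1 : ((2*m : ℕ) : ℝ)/2 = (m:ℝ) := by push_cast; ring
        rw [sgPhi, e1, show (m:ℝ)+1 = ((m:ℕ):ℝ)+1 from rfl, Real.Gamma_nat_eq_factorial,
          Real.rpow_natCast, pow_mul, ← mul_pow]
      simp only [key]
      exact Real.summable_pow_div_factorial (b^2 * t)
    · apply Summable.of_nonneg_of_le (fun m => sgPhi_nonneg hC _ ht)
        (f := fun m => (2 * b * t ^ (1/2:ℝ)) * ((b^2*t)^m / (m.factorial : ℝ)))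
      · intro m
        have e2 : ((2*m+1 : ℕ) : ℝ)/2 = (m:ℝ) + 1/2 := by push_cast; ring
        have hsq : t ^ ((m:ℝ) + 1/2) = t^m * t^(1/2:ℝ) := by
          rw [Real.rpow_add h0, Real.rpow_natCast]
        rw [sgPhi, e2, hsq, show (m:ℝ) + 1/2 + 1 = (m:ℝ) + 3/2 by ring]
        have h1 := sgGamma_half_ge m
        have h2 : (0:ℝ) < (m.factorial : ℝ) / 2 := by positivity
        have h3 : (0:ℝ) < Real.Gamma ((m:ℝ) + 3/2) := Real.Gamma_pos_of_pos (by positivity)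
        have hnum : (0:ℝ) ≤ b ^ (2*m+1) * (t^m * t^(1/2:ℝ)) := by positivity
        calc b ^ (2*m+1) * (t^m * t^(1/2:ℝ)) / Real.Gamma ((m:ℝ) + 3/2)
            ≤ b ^ (2*m+1) * (t^m * t^(1/2:ℝ)) / ((m.factorial : ℝ)/2) :=
              div_le_div_of_nonneg_left hnum h2 h1
          _ = (2 * b * t ^ (1/2:ℝ)) * ((b^2*t)^m / (m.factorial : ℝ)) := by
              rw [pow_add, pow_mul, mul_pow]; field_simp; ring
      · exact (Real.summable_pow_div_factorial (b^2*t)).mul_left _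

lemma sgPhi_step {C : ℝ} (hC : 0 ≤ C) {t : ℝ} (ht : 0 < t) (k : ℕ) :
    C * ∫ τ in Set.Ioo 0 t, (t - τ) ^ (-(1/2:ℝ)) * sgPhi C k τ = sgPhi C (k+1) t := by
  have hp : (0:ℝ) ≤ (k:ℝ)/2 := by positivity
  have h1 : ∀ τ : ℝ, sgPhi C k τ
      = ((C*Real.Gamma (1/2))^k / Real.Gamma ((k:ℝ)/2+1)) * τ ^ ((k:ℝ)/2) := by
    intro τ; rw [sgPhi]; ring
  have h2 : ∫ τ in Set.Ioo 0 t, (t - τ) ^ (-(1/2:ℝ)) * sgPhi C k τ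
      = ((C*Real.Gamma (1/2))^k / Real.Gamma ((k:ℝ)/2+1))
        * ∫ τ in Set.Ioo 0 t, (t - τ) ^ (-(1/2:ℝ)) * τ ^ ((k:ℝ)/2) := by
    rw [← MeasureTheory.integral_const_mul]
    exact setIntegral_congr_fun measurableSet_Ioo (fun τ _ => by rw [h1]; ring)
  rw [h2, I_eval ht hp]
  rw [sgPhi, show (((k+1:ℕ)):ℝ)/2 = (k:ℝ)/2 + 1/2 by push_cast; ring]
  rw [show (k:ℝ)/2 + 1/2 + 1 = (k:ℝ)/2 + 3/2 by ring]
  have hΓ1 : Real.Gamma ((k:ℝ)/2+1) ≠ 0 := (sgGamma_pos k).ne'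
  have hΓ2 : Real.Gamma ((k:ℝ)/2+3/2) ≠ 0 := (Real.Gamma_pos_of_pos (by positivity)).ne'
  rw [pow_succ]
  field_simp

lemma sgPhi_ker_int {C : ℝ} (hC : 0 ≤ C) {t : ℝ} (ht : 0 < t) (k : ℕ) :
    IntegrableOn (fun τ => (t - τ) ^ (-(1/2:ℝ)) * sgPhi C k τ) (Set.Ioo 0 t) := by
  apply ker_mul_int ht
  · exact ((sgPhi_cont k).mono (fun x hx => hx.1)).aestronglyMeasurable measurableSet_Ioo
  · intro τ hτ
    rw [abs_of_nonneg (sgPhi_nonneg hC k hτ.1.le)]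
    exact sgPhi_mono hC k hτ.1.le hτ.2.le

end SingularGronwallAux

open Set Filter in
theorem singular_gronwall
    (T : ℝ) (hT : 0 < T)
    (v : ℝ → ℝ)
    (hvcont : ContinuousOn v (Set.Icc 0 T))
    (hvnonneg : ∀ t ∈ Set.Icc (0:ℝ) T, 0 ≤ v t)
    (hvbdd : ∃ M : ℝ, ∀ t ∈ Set.Icc (0:ℝ) T, v t ≤ M)
    (A C : ℝ) (hA : 0 ≤ A) (hC : 0 ≤ C)
    (hineq : ∀ t ∈ Set.Icc (0:ℝ) T,
      v t ≤ A + C * ∫ τ in Set.Ioo 0 t, (t - τ) ^ (-(1/2 : ℝ)) * v τ) :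
    (∀ t ∈ Set.Icc (0:ℝ) T,
      v t ≤ A * ∑' n : ℕ, (C * Real.Gamma (1/2)) ^ n * t ^ ((n : ℝ) / 2) /
        Real.Gamma ((n : ℝ) / 2 + 1)) ∧
    ∃ c : ℝ, 0 < c ∧ ∀ t ∈ Set.Icc (0:ℝ) T, v t ≤ A * c := by
  obtain ⟨M₀, hM₀⟩ := hvbdd
  set M := max M₀ 0 with hMdef
  have hM : ∀ t ∈ Set.Icc (0:ℝ) T, v t ≤ M := fun t ht => (hM₀ t ht).trans (le_max_left _ _)
  have hM0 : 0 ≤ M := le_max_right _ _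
  -- the key induction
  have main : ∀ n : ℕ, ∀ t ∈ Set.Icc (0:ℝ) T,
      v t ≤ A * (∑ k ∈ Finset.range n, sgPhi C k t) + M * sgPhi C n t := by
    intro n
    induction n with
    | zero =>
      intro t ht
      simpa [sgPhi_zero] using hM t ht
    | succ n ih =>
      intro t htmem
      obtain ⟨ht0, htT⟩ := htmem
      rcases eq_or_lt_of_le ht0 with h0 | h0
      · -- t = 0
        subst h0
        have hv0 : v 0 ≤ A := by simpa using hineq 0 ⟨le_refl 0, hT.le⟩
        have hsum : ∑ k ∈ Finset.range (n+1), sgPhi C k 0 = 1 := by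
          rw [Finset.sum_eq_single_of_mem 0 (Finset.mem_range.2 (Nat.succ_pos n))
            (fun k _ hk => sgPhi_at_zero C k hk)]
          exact sgPhi_zero C 0
        rw [hsum, sgPhi_at_zero C (n+1) (Nat.succ_ne_zero n)]
        simpa using hv0
      · -- 0 < t
        have hIoosub : Set.Ioo (0:ℝ) t ⊆ Set.Icc (0:ℝ) T :=
          fun τ hτ => ⟨hτ.1.le, hτ.2.le.trans htT⟩
        have hv_int : IntegrableOn (fun τ => (t - τ) ^ (-(1/2:ℝ)) * v τ) (Set.Ioo 0 t) := by
          apply ker_mul_int h0 (K := M)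
          · exact (hvcont.mono hIoosub).aestronglyMeasurable measurableSet_Ioo
          · intro τ hτ
            rw [abs_of_nonneg (hvnonneg τ (hIoosub hτ))]
            exact hM τ (hIoosub hτ)
        -- the dominating function and its integrability
        set g : ℝ → ℝ := fun τ => (∑ k ∈ Finset.range n,
            A * ((t - τ) ^ (-(1/2:ℝ)) * sgPhi C k τ))
          + M * ((t - τ) ^ (-(1/2:ℝ)) * sgPhi C n τ) with hgdef
        have hg_int : IntegrableOn g (Set.Ioo 0 t) := by
          apply Integrable.add
          · exact integrable_finset_sum _ (fun k _ => (sgPhi_ker_int hC h0 k).const_mul A)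
          · exact (sgPhi_ker_int hC h0 n).const_mul M
        have hgeq : ∀ τ, (t - τ) ^ (-(1/2:ℝ))
            * (A * (∑ k ∈ Finset.range n, sgPhi C k τ) + M * sgPhi C n τ) = g τ := by
          intro τ
          rw [hgdef, mul_add]
          simp only [Finset.mul_sum]
          congr 1
          · exact Finset.sum_congr rfl fun k _ => by ring
          · ring
        have hmono : (∫ τ in Set.Ioo 0 t, (t - τ) ^ (-(1/2:ℝ)) * v τ)
            ≤ ∫ τ in Set.Ioo 0 t, g τ := by
          apply setIntegral_mono_on hv_int hg_int measurableSet_Ioo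
          intro τ hτ
          rw [← hgeq τ]
          have hker : (0:ℝ) ≤ (t - τ) ^ (-(1/2:ℝ)) :=
            Real.rpow_nonneg (by linarith [hτ.2]) _
          exact mul_le_mul_of_nonneg_left (ih τ (hIoosub hτ)) hker
        have hgval : C * ∫ τ in Set.Ioo 0 t, g τ
            = A * (∑ k ∈ Finset.range n, sgPhi C (k+1) t) + M * sgPhi C (n+1) t := by
          rw [hgdef]
          rw [MeasureTheory.integral_add
            (integrable_finset_sum _ (fun k _ => (sgPhi_ker_int hC h0 k).const_mul A))
            ((sgPhi_ker_int hC h0 n).const_mul M)]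
          rw [MeasureTheory.integral_finset_sum _
            (fun k _ => (sgPhi_ker_int hC h0 k).const_mul A)]
          simp only [MeasureTheory.integral_const_mul]
          rw [mul_add, Finset.mul_sum, Finset.mul_sum]
          congr 1
          · exact Finset.sum_congr rfl fun k _ => by rw [← sgPhi_step hC h0 k]; ring
          · rw [← sgPhi_step hC h0 n]; ring
        calc v t ≤ A + C * ∫ τ in Set.Ioo 0 t, (t - τ) ^ (-(1/2:ℝ)) * v τ :=
              hineq t ⟨ht0, htT⟩
          _ ≤ A + C * ∫ τ in Set.Ioo 0 t, g τ := by
              have := mul_le_mul_of_nonneg_left hmono hC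
              linarith
          _ = A + (A * (∑ k ∈ Finset.range n, sgPhi C (k+1) t) + M * sgPhi C (n+1) t) := by
              rw [hgval]
          _ = A * (∑ k ∈ Finset.range (n+1), sgPhi C k t) + M * sgPhi C (n+1) t := by
              rw [Finset.sum_range_succ' (fun k => sgPhi C k t) n, sgPhi_zero]
              ring
  -- pass to the limit
  have part1 : ∀ t ∈ Set.Icc (0:ℝ) T, v t ≤ A * ∑' n : ℕ, sgPhi C n t := by
    intro t htmem
    have hsum := sgPhi_summable hC htmem.1
    have hlim : Tendsto (fun n => A * (∑ k ∈ Finset.range n, sgPhi C k t) + M * sgPhi C n t)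
        atTop (nhds (A * ∑' n, sgPhi C n t + M * 0)) := by
      exact (hsum.hasSum.tendsto_sum_nat.const_mul A).add (hsum.tendsto_atTop_zero.const_mul M)
    have := ge_of_tendsto' hlim (fun n => main n t htmem)
    simpa using this
  constructor
  · exact fun t ht => part1 t ht
  · refine ⟨∑' n : ℕ, sgPhi C n T, ?_, ?_⟩
    · have h1 : (1:ℝ) = sgPhi C 0 T := (sgPhi_zero C T).symm
      have h2 : sgPhi C 0 T ≤ ∑' n, sgPhi C n T :=
        Summable.le_tsum (sgPhi_summable hC hT.le) 0 (fun j _ => sgPhi_nonneg hC j hT.le)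
      linarith [h1 ▸ h2]
    · intro t htmem
      refine (part1 t htmem).trans (mul_le_mul_of_nonneg_left ?_ hA)
      exact Summable.tsum_le_tsum (fun n => sgPhi_mono hC n htmem.1 htmem.2)
        (sgPhi_summable hC htmem.1) (sgPhi_summable hC hT.le)
end
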